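/- For ν > −1/2, the Bessel-Struve kernel B_ν satisfies the non-homogeneous differential equation z² B_ν''(z) + (2ν+1) z B_ν'(z) − z² B_ν(z) = z · M for all z in the unit disk, where M = 2Γ(ν+1)/(√π Γ(ν+1/2)). -/

import Mathlib

/-- The Bessel-Struve kernel function. -/
noncomputable def besselStruve (ν : ℝ) (z : ℂ) : ℂ :=
  ∑' n : ℕ, ((Real.Gamma (ν + 1) * Real.Gamma (((n : ℝ) + 1) / 2) /
    (Real.sqrt Real.pi * (n.factorial : ℝ) * Real.Gamma ((n : ℝ) / 2 + ν + 1)) : ℝ) : ℂ) * z ^ n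

/-- coefficient of the Bessel-Struve kernel -/
noncomputable def bsC (ν : ℝ) (n : ℕ) : ℝ :=
  Real.Gamma (ν + 1) * Real.Gamma (((n : ℝ) + 1) / 2) /
    (Real.sqrt Real.pi * (n.factorial : ℝ) * Real.Gamma ((n : ℝ) / 2 + ν + 1))

lemma bsC_pos (ν : ℝ) (hν : -(1/2) < ν) (n : ℕ) : 0 < bsC ν n := by
  have h1 : (0:ℝ) < Real.Gamma (ν + 1) := Real.Gamma_pos_of_pos (by linarith)
  have h2 : (0:ℝ) < Real.Gamma (((n : ℝ) + 1) / 2) :=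
    Real.Gamma_pos_of_pos (by positivity)
  have h3 : (0:ℝ) < Real.Gamma ((n : ℝ) / 2 + ν + 1) :=
    Real.Gamma_pos_of_pos (by nlinarith [Nat.cast_nonneg (α := ℝ) n])
  have h4 : (0:ℝ) < Real.sqrt Real.pi := Real.sqrt_pos.2 Real.pi_pos
  have h5 : (0:ℝ) < (n.factorial : ℝ) := by exact_mod_cast n.factorial_pos
  unfold bsC; positivity

lemma bsC_rec (ν : ℝ) (hν : -(1/2) < ν) (n : ℕ) :
    bsC ν (n+2) * (((n:ℝ)+2) * (((n:ℝ)+2) + 2*ν)) = bsC ν n := by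
  have hne1 : ((n:ℝ)+1)/2 ≠ 0 := by positivity
  have hpos : (0:ℝ) < (n:ℝ)/2 + ν + 1 := by
    have : (0:ℝ) ≤ (n:ℝ)/2 := by positivity
    linarith
  have hg1 : Real.Gamma ((((n:ℝ)+2) + 1)/2) = (((n:ℝ)+1)/2) * Real.Gamma (((n:ℝ)+1)/2) := by
    rw [show (((n:ℝ)+2) + 1)/2 = ((n:ℝ)+1)/2 + 1 by ring, Real.Gamma_add_one hne1]
  have hg2 : Real.Gamma (((n:ℝ)+2)/2 + ν + 1)
      = ((n:ℝ)/2 + ν + 1) * Real.Gamma ((n:ℝ)/2 + ν + 1) := by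
    rw [show ((n:ℝ)+2)/2 + ν + 1 = ((n:ℝ)/2 + ν + 1) + 1 by ring,
      Real.Gamma_add_one (ne_of_gt hpos)]
  have hfac : ((n+2).factorial : ℝ) = ((n:ℝ)+2) * ((n:ℝ)+1) * (n.factorial : ℝ) := by
    rw [Nat.factorial_succ, Nat.factorial_succ]; push_cast; ring
  have hG : (0:ℝ) < Real.Gamma ((n : ℝ) / 2 + ν + 1) := Real.Gamma_pos_of_pos hpos
  have h4 : (0:ℝ) < Real.sqrt Real.pi := Real.sqrt_pos.2 Real.pi_pos
  have h5 : (0:ℝ) < (n.factorial : ℝ) := by exact_mod_cast n.factorial_pos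
  have hA : (0:ℝ) < Real.Gamma (((n:ℝ)+1)/2) := Real.Gamma_pos_of_pos (by positivity)
  have hC : Real.sqrt Real.pi * (((n:ℝ)+2) * ((n:ℝ)+1) * (n.factorial : ℝ)) *
      (((n:ℝ)/2 + ν + 1) * Real.Gamma ((n:ℝ)/2 + ν + 1)) ≠ 0 := by
    refine ne_of_gt (mul_pos (mul_pos h4 ?_) (mul_pos hpos hG))
    have : (0:ℝ) < (n:ℝ)+2 := by positivity
    have h6 : (0:ℝ) < (n:ℝ)+1 := by positivity
    exact mul_pos (mul_pos this h6) h5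
  have hD : Real.sqrt Real.pi * (n.factorial : ℝ) * Real.Gamma ((n:ℝ)/2 + ν + 1) ≠ 0 :=
    ne_of_gt (mul_pos (mul_pos h4 h5) hG)
  unfold bsC
  push_cast
  rw [hg1, hg2, hfac]
  rw [div_mul_eq_mul_div, div_eq_div_iff hC hD]
  ring

lemma bsC_one (ν : ℝ) (hν : -(1/2) < ν) :
    (2*ν+1) * bsC ν 1 = 2 * Real.Gamma (ν + 1) / (Real.sqrt Real.pi * Real.Gamma (ν + 1/2)) := by
  have hpos : (0:ℝ) < ν + 1/2 := by linarith
  have hg : Real.Gamma ((1:ℝ)/2 + ν + 1) = (ν + 1/2) * Real.Gamma (ν + 1/2) := by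
    rw [show (1:ℝ)/2 + ν + 1 = (ν + 1/2) + 1 by ring, Real.Gamma_add_one (ne_of_gt hpos)]
  have hG : (0:ℝ) < Real.Gamma (ν + 1/2) := Real.Gamma_pos_of_pos hpos
  have h4 : (0:ℝ) < Real.sqrt Real.pi := Real.sqrt_pos.2 Real.pi_pos
  unfold bsC
  norm_num
  rw [hg, mul_div_assoc']
  rw [div_eq_div_iff (ne_of_gt (mul_pos h4 (mul_pos hpos hG))) (ne_of_gt (mul_pos h4 hG))]
  ring

lemma bsC_half_le (ν : ℝ) (hν : -(1/2) < ν) (n : ℕ) : bsC ν (n+2) ≤ bsC ν n / 2 := by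
  have hrec := bsC_rec ν hν n
  have hp2 := bsC_pos ν hν (n+2)
  have hn : (0:ℝ) ≤ (n:ℝ) := Nat.cast_nonneg n
  have hK : (2:ℝ) ≤ ((n:ℝ)+2) * (((n:ℝ)+2) + 2*ν) := by nlinarith
  nlinarith [mul_nonneg hp2.le (sub_nonneg.2 hK)]

lemma bsC_le (ν : ℝ) (hν : -(1/2) < ν) (n : ℕ) :
    bsC ν n ≤ (max (bsC ν 0) (bsC ν 1 * Real.sqrt 2)) * ((Real.sqrt 2)⁻¹)^n := by
  have hs2 : (0:ℝ) < Real.sqrt 2 := by positivity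
  have hsq : ((Real.sqrt 2)⁻¹)^2 = 1/2 := by
    rw [inv_pow, Real.sq_sqrt (by norm_num : (2:ℝ) ≥ 0)]; norm_num
  induction n using Nat.strong_induction_on with
  | _ n ih =>
    match n with
    | 0 => simpa using le_max_left (bsC ν 0) (bsC ν 1 * Real.sqrt 2)
    | 1 =>
        have h := le_max_right (bsC ν 0) (bsC ν 1 * Real.sqrt 2)
        have : bsC ν 1 * Real.sqrt 2 * ((Real.sqrt 2)⁻¹)^1 = bsC ν 1 := by
          field_simp
        calc bsC ν 1 = bsC ν 1 * Real.sqrt 2 * ((Real.sqrt 2)⁻¹)^1 := this.symm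
          _ ≤ (max (bsC ν 0) (bsC ν 1 * Real.sqrt 2)) * ((Real.sqrt 2)⁻¹)^1 := by
              apply mul_le_mul_of_nonneg_right h; positivity
    | (m+2) =>
        have hm := ih m (by omega)
        calc bsC ν (m+2) ≤ bsC ν m / 2 := bsC_half_le ν hν m
          _ ≤ (max (bsC ν 0) (bsC ν 1 * Real.sqrt 2)) * ((Real.sqrt 2)⁻¹)^m / 2 := by linarith
          _ = (max (bsC ν 0) (bsC ν 1 * Real.sqrt 2)) * ((Real.sqrt 2)⁻¹)^(m+2) := by
              rw [pow_add, hsq]; ring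

noncomputable def bsG1 (ν : ℝ) (n : ℕ) (w : ℂ) : ℂ := ((bsC ν n : ℝ) : ℂ) * n * w ^ (n-1)
noncomputable def bsG2 (ν : ℝ) (n : ℕ) (w : ℂ) : ℂ :=
  ((bsC ν n : ℝ) : ℂ) * n * ((n-1 : ℕ) : ℂ) * w ^ (n-1-1)

theorem besselStruve_ode (ν : ℝ) (hν : -(1/2) < ν) (z : ℂ) (hz : ‖z‖ < 1) :
    z ^ 2 * deriv (deriv (besselStruve ν)) z +
      (2 * (ν : ℂ) + 1) * z * deriv (besselStruve ν) z - z ^ 2 * besselStruve ν z =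
      z * ((2 * Real.Gamma (ν + 1) / (Real.sqrt Real.pi * Real.Gamma (ν + 1/2)) : ℝ) : ℂ) := by
  have hF : besselStruve ν = fun w => ∑' n : ℕ, ((bsC ν n : ℝ) : ℂ) * w ^ n := rfl
  set A : ℝ := max (bsC ν 0) (bsC ν 1 * Real.sqrt 2) with hA_def
  set wq : ℝ := (Real.sqrt 2)⁻¹ with hwq_def
  have hA0 : 0 ≤ A := le_trans (bsC_pos ν hν 0).le (le_max_left _ _)
  have hw0 : 0 ≤ wq := by positivity
  have hw1 : wq < 1 := by
    rw [hwq_def]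
    have h2 : (1:ℝ) < Real.sqrt 2 := by
      rw [show (1:ℝ) = Real.sqrt 1 from (Real.sqrt_one).symm]
      exact Real.sqrt_lt_sqrt (by norm_num) (by norm_num)
    exact inv_lt_one_of_one_lt₀ h2
  have hw1' : ‖wq‖ < 1 := by rwa [Real.norm_eq_abs, abs_of_nonneg hw0]
  -- norms
  have hnorm0 : ∀ (n : ℕ) (w : ℂ), ‖w‖ < 1 → ‖((bsC ν n : ℝ) : ℂ) * w ^ n‖ ≤ A * wq ^ n := by
    intro n w hw
    have h1 : ‖((bsC ν n : ℝ) : ℂ) * w ^ n‖ = bsC ν n * ‖w‖ ^ n := by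
      simp [norm_mul, norm_pow, Complex.norm_real, abs_of_pos (bsC_pos ν hν n)]
    rw [h1]
    calc bsC ν n * ‖w‖ ^ n ≤ bsC ν n * 1 :=
          mul_le_mul_of_nonneg_left (pow_le_one₀ (norm_nonneg w) hw.le) (bsC_pos ν hν n).le
      _ = bsC ν n := mul_one _
      _ ≤ A * wq ^ n := bsC_le ν hν n
  have hnorm1 : ∀ (n : ℕ) (w : ℂ), ‖w‖ < 1 →
      ‖bsG1 ν n w‖ ≤ A * ((n:ℝ) ^ 1 * wq ^ n) := by
    intro n w hw
    have h1 : ‖bsG1 ν n w‖ = bsC ν n * n * ‖w‖ ^ (n-1) := by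
      simp [bsG1, norm_mul, norm_pow, Complex.norm_real, Complex.norm_natCast,
        abs_of_pos (bsC_pos ν hν n)]
    rw [h1]
    have h2 : ‖w‖ ^ (n-1) ≤ 1 := pow_le_one₀ (norm_nonneg w) hw.le
    calc bsC ν n * n * ‖w‖ ^ (n-1) ≤ bsC ν n * n * 1 :=
          mul_le_mul_of_nonneg_left h2 (mul_nonneg (bsC_pos ν hν n).le (Nat.cast_nonneg n))
      _ = bsC ν n * n := mul_one _
      _ ≤ (A * wq ^ n) * n := mul_le_mul_of_nonneg_right (bsC_le ν hν n) (Nat.cast_nonneg n)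
      _ = A * ((n:ℝ) ^ 1 * wq ^ n) := by ring
  have hnorm2 : ∀ (n : ℕ) (w : ℂ), ‖w‖ < 1 →
      ‖bsG2 ν n w‖ ≤ A * ((n:ℝ) ^ 2 * wq ^ n) := by
    intro n w hw
    have h1 : ‖bsG2 ν n w‖ = bsC ν n * n * ((n-1 : ℕ):ℝ) * ‖w‖ ^ (n-1-1) := by
      simp [bsG2, norm_mul, norm_pow, Complex.norm_real, Complex.norm_natCast,
        abs_of_pos (bsC_pos ν hν n)]
    rw [h1]
    have h2 : ‖w‖ ^ (n-1-1) ≤ 1 := pow_le_one₀ (norm_nonneg w) hw.le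
    have h3 : ((n-1 : ℕ):ℝ) ≤ (n:ℝ) := by exact_mod_cast Nat.sub_le n 1
    have h4 : (0:ℝ) ≤ (n:ℝ) := Nat.cast_nonneg n
    calc bsC ν n * n * ((n-1 : ℕ):ℝ) * ‖w‖ ^ (n-1-1) ≤ bsC ν n * n * ((n-1 : ℕ):ℝ) * 1 :=
          mul_le_mul_of_nonneg_left h2
            (mul_nonneg (mul_nonneg (bsC_pos ν hν n).le h4) (Nat.cast_nonneg _))
      _ = bsC ν n * n * ((n-1 : ℕ):ℝ) := mul_one _
      _ ≤ bsC ν n * n * (n:ℝ) :=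
          mul_le_mul_of_nonneg_left h3 (mul_nonneg (bsC_pos ν hν n).le h4)
      _ ≤ (A * wq ^ n) * n * (n:ℝ) :=
          mul_le_mul_of_nonneg_right (mul_le_mul_of_nonneg_right (bsC_le ν hν n) h4) h4
      _ = A * ((n:ℝ) ^ 2 * wq ^ n) := by ring
  -- summable bounds
  have hsum0 : Summable (fun n : ℕ => A * wq ^ n) :=
    (summable_geometric_of_lt_one hw0 hw1).mul_left A
  have hsum1 : Summable (fun n : ℕ => A * ((n:ℝ) ^ 1 * wq ^ n)) :=
    (summable_pow_mul_geometric_of_norm_lt_one 1 hw1').mul_left A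
  have hsum2 : Summable (fun n : ℕ => A * ((n:ℝ) ^ 2 * wq ^ n)) :=
    (summable_pow_mul_geometric_of_norm_lt_one 2 hw1').mul_left A
  -- ball setup
  set t : Set ℂ := Metric.ball (0:ℂ) 1 with ht_def
  have ht : IsOpen t := Metric.isOpen_ball
  have htc : IsPreconnected t := (convex_ball (0:ℂ) 1).isPreconnected
  have hmem : ∀ w : ℂ, w ∈ t ↔ ‖w‖ < 1 := by
    intro w; rw [ht_def, Metric.mem_ball, dist_zero_right]
  have h0t : (0:ℂ) ∈ t := by rw [hmem]; simp
  have hzt : z ∈ t := by rw [hmem]; exact hz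
  -- first derivative
  have hd1 : ∀ y ∈ t, HasDerivAt (besselStruve ν) (∑' n, bsG1 ν n y) y := by
    intro y hy
    rw [hF]
    refine hasDerivAt_tsum_of_isPreconnected hsum1 ht htc ?_ ?_ h0t ?_ hy
    · intro n w _
      have := (hasDerivAt_pow n w).const_mul ((bsC ν n : ℝ) : ℂ)
      refine this.congr_deriv ?_
      simp [bsG1]; ring
    · intro n w hw
      exact hnorm1 n w ((hmem w).1 hw)
    · exact Summable.of_norm_bounded hsum0 (fun n => hnorm0 n 0 (by simp))
  have hd2 : ∀ y ∈ t, HasDerivAt (fun w => ∑' n, bsG1 ν n w) (∑' n, bsG2 ν n y) y := by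
    intro y hy
    refine hasDerivAt_tsum_of_isPreconnected hsum2 ht htc ?_ ?_ h0t ?_ hy
    · intro n w _
      have := (hasDerivAt_pow (n-1) w).const_mul (((bsC ν n : ℝ) : ℂ) * n)
      refine this.congr_deriv ?_
      simp only [bsG2]; ring
    · intro n w hw
      exact hnorm2 n w ((hmem w).1 hw)
    · exact Summable.of_norm_bounded hsum1 (fun n => hnorm1 n 0 (by simp))
  have h1' : deriv (besselStruve ν) z = ∑' n, bsG1 ν n z := (hd1 z hzt).deriv
  have h2' : deriv (deriv (besselStruve ν)) z = ∑' n, bsG2 ν n z := by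
    have heq : deriv (besselStruve ν) =ᶠ[nhds z] (fun w => ∑' n, bsG1 ν n w) :=
      Filter.eventuallyEq_of_mem (ht.mem_nhds hzt) (fun y hy => (hd1 y hy).deriv)
    rw [heq.deriv_eq]
    exact (hd2 z hzt).deriv
  rw [h1', h2', hF]
  -- summability at z
  have S0 : Summable (fun n : ℕ => ((bsC ν n : ℝ) : ℂ) * z ^ n) :=
    Summable.of_norm_bounded hsum0 (fun n => hnorm0 n z hz)
  have S1 : Summable (fun n : ℕ => bsG1 ν n z) :=
    Summable.of_norm_bounded hsum1 (fun n => hnorm1 n z hz)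
  have S2 : Summable (fun n : ℕ => bsG2 ν n z) :=
    Summable.of_norm_bounded hsum2 (fun n => hnorm2 n z hz)
  -- termwise combination
  have key : ∀ n : ℕ, z^2 * bsG2 ν n z + (2 * (ν:ℂ) + 1) * z * bsG1 ν n z =
      (((bsC ν n : ℝ):ℂ) * n * ((n:ℂ) + 2*ν)) * z ^ n := by
    intro n
    match n with
    | 0 => simp [bsG1, bsG2]
    | 1 => simp [bsG1, bsG2]; ring
    | (m+2) =>
      simp only [bsG1, bsG2]
      rw [show m+2-1-1 = m from rfl, show m+2-1 = m+1 from rfl]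
      push_cast
      ring
  have e2 : z^2 * (∑' n, bsG2 ν n z) = ∑' n, z^2 * bsG2 ν n z := (tsum_mul_left).symm
  have e1 : (2 * (ν:ℂ) + 1) * z * (∑' n, bsG1 ν n z) =
      ∑' n, (2 * (ν:ℂ) + 1) * z * bsG1 ν n z := (tsum_mul_left).symm
  have e0 : z^2 * (∑' n, ((bsC ν n : ℝ):ℂ) * z ^ n) =
      ∑' n, ((bsC ν n : ℝ):ℂ) * z ^ (n+2) := by
    rw [← tsum_mul_left]
    exact tsum_congr (fun n => by ring)
  rw [e2, e1, e0]
  have hcomb : (∑' n, z^2 * bsG2 ν n z) + (∑' n, (2 * (ν:ℂ) + 1) * z * bsG1 ν n z) =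
      ∑' n, (((bsC ν n : ℝ):ℂ) * n * ((n:ℂ) + 2*ν)) * z ^ n := by
    rw [← Summable.tsum_add (S2.mul_left _) (S1.mul_left _)]
    exact tsum_congr key
  have Sh : Summable (fun n : ℕ => (((bsC ν n : ℝ):ℂ) * n * ((n:ℂ) + 2*ν)) * z ^ n) :=
    ((S2.mul_left (z^2)).add (S1.mul_left ((2 * (ν:ℂ) + 1) * z))).congr key
  have hsplit : (∑' n, (((bsC ν n : ℝ):ℂ) * n * ((n:ℂ) + 2*ν)) * z ^ n) =
      z * ((2 * Real.Gamma (ν + 1) / (Real.sqrt Real.pi * Real.Gamma (ν + 1/2)) : ℝ) : ℂ) +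
      ∑' n, ((bsC ν n : ℝ):ℂ) * z ^ (n+2) := by
    rw [Summable.tsum_eq_zero_add Sh, Summable.tsum_eq_zero_add ((summable_nat_add_iff 1).mpr Sh)]
    have hz0 : (((bsC ν 0 : ℝ):ℂ) * (0:ℕ) * (((0:ℕ):ℂ) + 2*ν)) * z ^ (0:ℕ) = 0 := by simp
    have hz1 : (((bsC ν 1 : ℝ):ℂ) * ((1:ℕ):ℂ) * (((1:ℕ):ℂ) + 2*ν)) * z ^ (1:ℕ) =
        z * ((2 * Real.Gamma (ν + 1) / (Real.sqrt Real.pi * Real.Gamma (ν + 1/2)) : ℝ) : ℂ) := by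
      have := bsC_one ν hν
      have hc : ((2*ν+1) * bsC ν 1 : ℝ) =
          ((2 * Real.Gamma (ν + 1) / (Real.sqrt Real.pi * Real.Gamma (ν + 1/2)) : ℝ)) := this
      have hcC : ((2:ℂ)*ν+1) * ((bsC ν 1 : ℝ):ℂ) =
          ((2 * Real.Gamma (ν + 1) / (Real.sqrt Real.pi * Real.Gamma (ν + 1/2)) : ℝ) : ℂ) := by
        exact_mod_cast congrArg Complex.ofReal hc
      rw [← hcC]; push_cast; ring
    have hrec : ∀ m : ℕ, (((bsC ν (m+2) : ℝ):ℂ) * ((m+2:ℕ):ℂ) * (((m+2:ℕ):ℂ) + 2*ν)) * z ^ (m+2)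
        = ((bsC ν m : ℝ):ℂ) * z ^ (m+2) := by
      intro m
      have h := bsC_rec ν hν m
      have hC : ((bsC ν (m+2) : ℝ):ℂ) * (((m:ℂ)+2) * (((m:ℂ)+2) + 2*(ν:ℂ))) =
          ((bsC ν m : ℝ):ℂ) := by exact_mod_cast congrArg Complex.ofReal h
      push_cast
      push_cast at hC
      rw [← hC]; ring
    simp only [hrec]
    rw [hz0, hz1]
    ring
  rw [hcomb, hsplit]
  ring
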